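/- If K = ℚ(√(A(Δ + B√Δ))) with Δ = B² + C² squarefree (B, C > 0), A odd squarefree, gcd(A,Δ)=1, then K is a cyclic quartic extension of ℚ, i.e., Gal(K/ℚ) ≅ ℤ/4ℤ. -/

import Mathlib

open Polynomial IntermediateField Module

set_option maxHeartbeats 1600000 in
lemma quad_minpoly' {F K : Type*} [Field F] [Field K] [Algebra F K]
    (x : K) (c : F) (hx2 : x ^ 2 = algebraMap F K c)
    (hx : x ∉ (algebraMap F K).range) :
    IsIntegral F x ∧ (minpoly F x).natDegree = 2 := by
  have hev : (Polynomial.aeval x) (X ^ 2 - Polynomial.C c) = 0 := by simp [hx2]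
  have hint : IsIntegral F x := ⟨X ^ 2 - Polynomial.C c, monic_X_pow_sub_C c two_ne_zero, by
    simpa using hev⟩
  refine ⟨hint, le_antisymm ?_ ((minpoly.two_le_natDegree_iff hint).mpr hx)⟩
  have hdvd : minpoly F x ∣ X ^ 2 - Polynomial.C c := minpoly.dvd F x hev
  have hne : (X ^ 2 - Polynomial.C c : F[X]) ≠ 0 := (monic_X_pow_sub_C c two_ne_zero).ne_zero
  simpa [natDegree_X_pow_sub_C] using Polynomial.natDegree_le_of_dvd hdvd hne

set_option maxHeartbeats 1600000 in
/-- `K = ℚ(√(A(Δ + B√Δ)))` with `Δ = B² + C²` squarefree (`B, C > 0`), `A` odd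
squarefree, `gcd(A, Δ) = 1`, is a cyclic quartic extension of `ℚ`:
it is Galois with `Gal(K/ℚ) ≅ ℤ/4ℤ`. -/
theorem cyclic_quartic_galois_group
    (A B C Δ : ℤ) (hAsf : Squarefree A) (hAodd : Odd A)
    (hΔ : Δ = B ^ 2 + C ^ 2) (hB : 0 < B) (hC : 0 < C) (hΔsf : Squarefree Δ)
    (hgcd : IsCoprime A Δ)
    (K : Type*) [Field K] [NumberField K] (θ s : K)
    (hs : s ^ 2 = (Δ : K)) (hθ : θ ^ 2 = (A : K) * ((Δ : K) + (B : K) * s))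
    (hgen : Algebra.adjoin ℚ {θ} = ⊤) :
    IsGalois ℚ K ∧ Nonempty ((K ≃ₐ[ℚ] K) ≃* Multiplicative (ZMod 4)) := by
  have hA0' : (A : ℚ) ≠ 0 := Int.cast_ne_zero.mpr hAsf.ne_zero
  have hC0' : (C : ℚ) ≠ 0 := Int.cast_ne_zero.mpr hC.ne'
  have hA0 : (A : K) ≠ 0 := Int.cast_ne_zero.mpr hAsf.ne_zero
  have hB0 : (B : K) ≠ 0 := Int.cast_ne_zero.mpr hB.ne'
  have hC0 : (C : K) ≠ 0 := Int.cast_ne_zero.mpr hC.ne'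
  have hΔK : (Δ : K) = (B : K) ^ 2 + (C : K) ^ 2 := by exact_mod_cast hΔ
  have hΔint : (Δ : ℚ) = (B : ℚ) ^ 2 + (C : ℚ) ^ 2 := by exact_mod_cast hΔ
  have hΔ2 : 2 ≤ Δ := by nlinarith
  have hcast : ∀ q : ℚ, algebraMap ℚ K q = (q : K) := fun q => eq_ratCast (algebraMap ℚ K) q
  have no_sq : ∀ q : ℚ, q ^ 2 ≠ (Δ : ℚ) := by
    intro q hq
    have hint : IsIntegral ℤ q :=
      ⟨X ^ 2 - Polynomial.C Δ, monic_X_pow_sub_C Δ two_ne_zero, by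
      rw [eval₂_sub, eval₂_pow, eval₂_X, eval₂_C]
      simp [hq]⟩
    obtain ⟨n, hn⟩ := IsIntegrallyClosed.isIntegral_iff.mp hint
    have hn2 : (n : ℚ) ^ 2 = (Δ : ℚ) := by rw [show ((n:ℤ):ℚ) = q from hn]; exact hq
    have hnz : n ^ 2 = Δ := by exact_mod_cast hn2
    have : IsUnit n := hΔsf n (by rw [← hnz]; ring_nf; exact dvd_refl _)
    rcases Int.isUnit_iff.mp this with h | h <;> subst h <;> simp at hnz <;> omega
  have no_sqK : ∀ q : ℚ, (q : K) ^ 2 ≠ (Δ : K) := by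
    intro q hq
    apply no_sq q
    have : ((q ^ 2 : ℚ) : K) = ((Δ : ℚ) : K) := by push_cast; exact_mod_cast hq
    exact_mod_cast this
  have hsirr : s ∉ (algebraMap ℚ K).range := by
    rintro ⟨q, rfl⟩
    rw [hcast] at hs
    exact no_sqK q hs
  have lin_indep : ∀ u v : ℚ, (u : K) + (v : K) * s = 0 → u = 0 ∧ v = 0 := by
    intro u v huv
    by_cases hv : v = 0
    · subst hv
      simp only [Rat.cast_zero, zero_mul, add_zero] at huv
      exact ⟨by exact_mod_cast huv, rfl⟩
    · exfalso
      have hvK : (v : K) ≠ 0 := by exact_mod_cast hv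
      have hsval : s = ((-u / v : ℚ) : K) := by
        push_cast
        field_simp
        linear_combination huv
      apply no_sqK (-u / v)
      rw [← hsval]; exact hs
  have hΔne : Δ ≠ 0 := by omega
  have hΔ0 : (Δ : K) ≠ 0 := Int.cast_ne_zero.mpr hΔne
  obtain ⟨hsint, hsdeg⟩ := quad_minpoly' s ((Δ : ℚ)) (by rw [hcast]; push_cast; rw [hs]) hsirr
  set F : IntermediateField ℚ K := ℚ⟮s⟯ with hF
  have hsF : s ∈ F := mem_adjoin_simple_self ℚ s
  have hrankF : Module.finrank ℚ F = 2 := by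
    rw [hF, adjoin.finrank hsint, hsdeg]
  have reprF : ∀ x : K, x ∈ F → ∃ u v : ℚ, x = (u : K) + (v : K) * s := by
    intro x hx
    have hx' : x ∈ Algebra.adjoin ℚ ({s} : Set K) := by
      have := adjoin_simple_toSubalgebra_of_isAlgebraic (F := ℚ) hsint.isAlgebraic
      rw [← this]; exact hx
    clear hx
    induction hx' using Algebra.adjoin_induction with
    | mem y hy => rcases hy with rfl; exact ⟨0, 1, by simp⟩
    | algebraMap r => exact ⟨r, 0, by simp [hcast]⟩
    | add y z hy hz ihy ihz =>
      obtain ⟨u₁, v₁, rfl⟩ := ihy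
      obtain ⟨u₂, v₂, rfl⟩ := ihz
      exact ⟨u₁ + u₂, v₁ + v₂, by push_cast; ring⟩
    | mul y z hy hz ihy ihz =>
      obtain ⟨u₁, v₁, rfl⟩ := ihy
      obtain ⟨u₂, v₂, rfl⟩ := ihz
      refine ⟨u₁ * u₂ + v₁ * v₂ * Δ, u₁ * v₂ + u₂ * v₁, ?_⟩
      push_cast
      linear_combination ((v₁:K) * (v₂:K)) * hs
  have hθF : θ ∉ F := by
    intro hmem
    obtain ⟨u, v, huv⟩ := reprF θ hmem
    have key : ((u^2 + v^2*Δ - A*Δ : ℚ) : K) + ((2*u*v - A*B : ℚ) : K) * s = 0 := by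
      push_cast
      linear_combination hθ - ((v:K)^2) * hs - (by rw [huv] : θ ^ 2 = ((u:K) + (v:K)*s)^2)
    obtain ⟨e1', e2'⟩ := lin_indep _ _ key
    have e1 : u^2 + v^2*(Δ:ℚ) = (A:ℚ)*Δ := by linarith [e1']
    have e2 : 2*u*v = (A:ℚ)*B := by linarith [e2']
    apply no_sq ((u^2 - v^2*(Δ:ℚ))/((A:ℚ)*(C:ℚ)))
    rw [div_pow, div_eq_iff (by positivity)]
    linear_combination (u^2+v^2*(Δ:ℚ)+(A:ℚ)*Δ)*e1 - ((Δ:ℚ)*(2*u*v+(A:ℚ)*B))*e2 + (A:ℚ)^2*(Δ:ℚ)*hΔint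
  -- θ over F
  have hθFrange : θ ∉ (algebraMap F K).range := by
    rintro ⟨y, rfl⟩
    exact hθF y.2
  have hcF : ((A : K) * ((Δ : K) + (B : K) * s)) ∈ F := by
    apply mul_mem (intCast_mem F A)
    exact add_mem (intCast_mem F Δ) (mul_mem (intCast_mem F B) hsF)
  obtain ⟨hθintF, hθdegF⟩ := quad_minpoly' θ (⟨_, hcF⟩ : F) (by rw [hθ, IntermediateField.algebraMap_apply]) hθFrange
  -- F⟮θ⟯ = ⊤
  have hFtop : (IntermediateField.adjoin ↥F ({θ} : Set K) : IntermediateField ↥F K) = ⊤ := by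
    rw [eq_top_iff]
    intro x hxtop
    clear hxtop
    have hx : x ∈ Algebra.adjoin ℚ ({θ} : Set K) := by rw [hgen]; trivial
    induction hx using Algebra.adjoin_induction with
    | mem y hy => exact IntermediateField.subset_adjoin ↥F _ hy
    | algebraMap r =>
      have : algebraMap ℚ K r = algebraMap F K (algebraMap ℚ F r) :=
        (IsScalarTower.algebraMap_apply ℚ F K r)
      rw [this]
      exact IntermediateField.algebraMap_mem _ _
    | add y z hy hz ihy ihz => exact add_mem ihy ihz
    | mul y z hy hz ihy ihz => exact mul_mem ihy ihz
  have hrankFK : Module.finrank F K = 2 := by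
    have := adjoin.finrank hθintF
    rw [hFtop] at this
    rw [← finrank_top' (F := F) (E := K), this, hθdegF]
  have hrank4 : Module.finrank ℚ K = 4 := by
    have := Module.finrank_mul_finrank ℚ F K
    rw [hrankF, hrankFK] at this
    omega
  have hθint : IsIntegral ℚ θ := IsIntegral.of_finite ℚ θ
  have hQtop : (ℚ⟮θ⟯ : IntermediateField ℚ K) = ⊤ := by
    rw [eq_top_iff]
    intro x _
    have hx : x ∈ Algebra.adjoin ℚ ({θ} : Set K) := by rw [hgen]; trivial
    exact IntermediateField.algebra_adjoin_le_adjoin ℚ _ hx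
  have hmindeg : (minpoly ℚ θ).natDegree = 4 := by
    have := adjoin.finrank hθint
    rw [hQtop, finrank_top'] at this
    omega
  have s0 : s ≠ 0 := by
    intro h; rw [h] at hs; exact hΔ0 (by simpa using hs.symm)
  have θ0 : θ ≠ 0 := by
    intro h
    have h0 : (A : K) * ((Δ : K) + (B : K) * s) = 0 := by rw [← hθ, h]; ring
    have h1 : (Δ : K) + (B : K) * s = 0 := by
      rcases mul_eq_zero.mp h0 with h' | h'
      · exact absurd h' hA0
      · exact h'
    have := lin_indep (Δ : ℚ) (B : ℚ) (by push_cast; linear_combination h1)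
    exact hΔne (by exact_mod_cast this.1)
  -- the quartic polynomial
  set p : ℚ[X] := X ^ 4 - Polynomial.C ((2 * A * Δ : ℤ) : ℚ) * X ^ 2
      + Polynomial.C (((A * C) ^ 2 * Δ : ℤ) : ℚ) with hp
  have hpmonic : p.Monic := by unfold p; monicity!
  have hpdeg : p.natDegree = 4 := by unfold p; compute_degree!
  have haevalθ : Polynomial.aeval θ p = 0 := by
    rw [hp]
    simp only [map_add, map_sub, map_mul, map_pow, aeval_X, aeval_C, hcast]
    push_cast
    linear_combination (θ^2 + (A:K)*((Δ:K)+(B:K)*s) - 2*(A:K)*(Δ:K)) * hθ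
      + (A:K)^2*(B:K)^2 * hs - (A:K)^2*(Δ:K) * hΔK
  have hpmin : minpoly ℚ θ = p := by
    have hdvd : minpoly ℚ θ ∣ p := minpoly.dvd ℚ θ haevalθ
    obtain ⟨q, hq⟩ := hdvd
    have hp0 : p ≠ 0 := hpmonic.ne_zero
    have hq0 : q ≠ 0 := by rintro rfl; rw [mul_zero] at hq; exact hp0 hq
    have hdeg : q.natDegree = 0 := by
      have := congrArg Polynomial.natDegree hq
      rw [Polynomial.natDegree_mul (minpoly.ne_zero hθint) hq0] at this
      omega
    have hqC : q = Polynomial.C (q.coeff 0) := Polynomial.eq_C_of_natDegree_eq_zero hdeg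
    have hlead : q.coeff 0 = 1 := by
      have := congrArg Polynomial.leadingCoeff hq
      rw [Polynomial.leadingCoeff_mul, hpmonic.leadingCoeff,
        (minpoly.monic hθint).leadingCoeff, one_mul, Polynomial.leadingCoeff, hdeg] at this
      exact this.symm
    rw [hq, hqC, hlead, map_one, mul_one]
  -- the conjugate root
  set t : K := (A : K) * (C : K) * s * θ⁻¹ with ht
  have t0 : t ≠ 0 := by
    rw [ht]
    exact mul_ne_zero (mul_ne_zero (mul_ne_zero hA0 hC0) s0) (inv_ne_zero θ0)
  have ht2 : t ^ 2 = (A : K) * ((Δ : K) - (B : K) * s) := by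
    rw [ht]
    field_simp
    linear_combination ((A:K)*(C:K)^2 + (A:K)*(B:K)^2)*hs
      - ((Δ:K) - (B:K)*s)*hθ - (A:K)*(Δ:K)*hΔK
  have haevalt : Polynomial.aeval t p = 0 := by
    rw [hp]
    simp only [map_add, map_sub, map_mul, map_pow, aeval_X, aeval_C, hcast]
    push_cast
    linear_combination (t^2 + (A:K)*((Δ:K)-(B:K)*s) - 2*(A:K)*(Δ:K)) * ht2
      + (A:K)^2*(B:K)^2 * hs - (A:K)^2*(Δ:K) * hΔK
  -- p splits in K with roots θ, -θ, t, -t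
  have hmap : p.map (algebraMap ℚ K)
      = (X - Polynomial.C θ) * (X + Polynomial.C θ) * (X - Polynomial.C t) * (X + Polynomial.C t) := by
    have h1 : ((2 * A * Δ : ℤ) : K) = θ ^ 2 + t ^ 2 := by
      rw [hθ, ht2]; push_cast; ring
    have h2 : (((A * C) ^ 2 * Δ : ℤ) : K) = θ ^ 2 * t ^ 2 := by
      rw [hθ, ht2]
      push_cast
      linear_combination ((A:K)^2*(Δ:K) - (A:K)^2*(C:K)^2)*hs - (A:K)^2*s^2*hΔK
    rw [hp]
    simp only [Polynomial.map_add, Polynomial.map_sub, Polynomial.map_mul, Polynomial.map_pow,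
      Polynomial.map_X, Polynomial.map_C, hcast]
    rw [show ((((2:ℤ) * A * Δ : ℤ):ℚ) : K) = θ ^ 2 + t ^ 2 from by exact_mod_cast h1,
      show (((((A:ℤ) * C) ^ 2 * Δ : ℤ):ℚ) : K) = θ ^ 2 * t ^ 2 from by exact_mod_cast h2]
    simp only [map_add, map_mul, map_pow]
    ring
  have hsplits : (p.map (algebraMap ℚ K)).Splits := by
    rw [hmap]
    refine Polynomial.Splits.mul (Polynomial.Splits.mul (Polynomial.Splits.mul ?_ ?_) ?_) ?_
    · exact Polynomial.Splits.X_sub_C _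
    · rw [show (X + Polynomial.C θ) = X - Polynomial.C (-θ) from by rw [map_neg, sub_neg_eq_add]]
      exact Polynomial.Splits.X_sub_C _
    · exact Polynomial.Splits.X_sub_C _
    · rw [show (X + Polynomial.C t) = X - Polynomial.C (-t) from by rw [map_neg, sub_neg_eq_add]]
      exact Polynomial.Splits.X_sub_C _
  have hsf : IsSplittingField ℚ K p := by
    constructor
    · exact hsplits
    · rw [eq_top_iff]
      intro x _
      have hx : x ∈ Algebra.adjoin ℚ ({θ} : Set K) := by rw [hgen]; trivial
      refine Algebra.adjoin_mono ?_ hx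
      intro y hy
      rcases hy with rfl
      rw [Polynomial.mem_rootSet]
      exact ⟨hpmonic.ne_zero, haevalθ⟩
  haveI := hsf
  haveI : Normal ℚ K := Normal.of_isSplittingField p
  haveI hgal : IsGalois ℚ K := ⟨⟩
  -- construct the automorphism σ with σ θ = t
  have pbroot : Polynomial.aeval t (minpoly ℚ (AdjoinSimple.gen ℚ θ)) = 0 := by
    erw [IntermediateField.minpoly_gen ℚ θ, hpmin]; exact haevalt
  set pb : PowerBasis ℚ (ℚ⟮θ⟯ : IntermediateField ℚ K) := adjoin.powerBasis hθint with hpb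
  have hpbgen : pb.gen = AdjoinSimple.gen ℚ θ := rfl
  set φ : (ℚ⟮θ⟯ : IntermediateField ℚ K) →ₐ[ℚ] K := pb.lift t pbroot with hφ
  set e : (ℚ⟮θ⟯ : IntermediateField ℚ K) ≃ₐ[ℚ] K :=
    (IntermediateField.equivOfEq hQtop).trans IntermediateField.topEquiv with he
  have heg : e (AdjoinSimple.gen ℚ θ) = θ := rfl
  set ψ : K →ₐ[ℚ] K := φ.comp e.symm.toAlgHom with hψ
  have hψθ : ψ θ = t := by
    rw [hψ]
    have hsymm : e.symm θ = AdjoinSimple.gen ℚ θ := (AlgEquiv.symm_apply_eq e).mpr heg.symm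
    simp only [AlgHom.coe_comp, Function.comp_apply, AlgEquiv.coe_algHom, hsymm]
    exact PowerBasis.lift_gen _ _ _
  haveI : FiniteDimensional ℚ K := inferInstance
  have hbij : Function.Bijective ψ := by
    refine ⟨ψ.toRingHom.injective, ?_⟩
    exact LinearMap.surjective_of_injective (f := ψ.toLinearMap) ψ.toRingHom.injective
  set σ : K ≃ₐ[ℚ] K := AlgEquiv.ofBijective ψ hbij with hσ
  have hσθ : σ θ = t := hψθ
  have hσint : ∀ n : ℤ, σ ((n : K)) = (n : K) := fun n => map_intCast σ n
  have hσs : σ s = -s := by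
    have h1 : σ (θ ^ 2) = (A : K) * ((Δ : K) + (B : K) * σ s) := by
      rw [hθ]; simp only [map_mul, map_add, map_pow, hσint]
    rw [map_pow, hσθ, ht2] at h1
    have h2 : (A : K) * (B : K) * (σ s + s) = 0 := by linear_combination -h1
    rcases mul_eq_zero.mp h2 with h' | h'
    · rcases mul_eq_zero.mp h' with h'' | h''
      · exact absurd h'' hA0
      · exact absurd h'' hB0
    · linear_combination h'
  have htt : θ * t = (A : K) * (C : K) * s := by rw [ht]; field_simp
  have hσt : σ t = -θ := by
    have h1 : σ θ * σ t = (A : K) * (C : K) * (-s) := by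
      rw [← map_mul, htt]; simp only [map_mul, hσint, hσs]
    rw [hσθ] at h1
    have h2 : t * (σ t + θ) = 0 := by linear_combination h1 + htt
    rcases mul_eq_zero.mp h2 with h' | h'
    · exact absurd h' t0
    · linear_combination h'
  have hσ2ne : σ * σ ≠ 1 := by
    intro h
    have h1 : σ (σ θ) = θ := by
      have := congrArg (fun f : K ≃ₐ[ℚ] K => f θ) h
      simpa [AlgEquiv.mul_apply] using this
    rw [hσθ, hσt] at h1
    have h2 : (2 : K) * θ = 0 := by linear_combination -h1
    rcases mul_eq_zero.mp h2 with h' | h'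
    · norm_num at h'
    · exact θ0 h'
  have hcard : Nat.card (K ≃ₐ[ℚ] K) = 4 := by
    rw [IsGalois.card_aut_eq_finrank, hrank4]
  have hdvd4 : orderOf σ ∣ 4 := hcard ▸ orderOf_dvd_natCard σ
  have hnd2 : ¬ orderOf σ ∣ 2 := by
    intro h
    apply hσ2ne
    have := orderOf_dvd_iff_pow_eq_one.mp h
    rwa [pow_two] at this
  have hord : orderOf σ = 4 := by
    have hle : orderOf σ ≤ 4 := Nat.le_of_dvd (by norm_num) hdvd4
    interval_cases h : orderOf σ <;> first | rfl | (exfalso; revert hdvd4 hnd2; decide)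
  haveI hcyc : IsCyclic (K ≃ₐ[ℚ] K) :=
    isCyclic_of_orderOf_eq_card σ (by rw [hord, hcard])
  refine ⟨hgal, ⟨mulEquivOfCyclicCardEq ?_⟩⟩
  rw [hcard, Nat.card_eq_fintype_card]
  rfl
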